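/- For every integer k ≥ 1 there exist 2Δ(k+1) + 2Δ(k) − 1 = 2(k+1)² − 1 points lying in a closed equilateral triangle of side length 2k − 1 + √3 in the Euclidean plane such that every two distinct points among them are at distance at least 1. (Equivalently, in the paper's normalization, d(2Δ(k+1) + 2Δ(k) − 1) ≥ 1/(2k − 1 + √3).) -/

import Mathlib

set_option maxHeartbeats 1000000
namespace TTP

noncomputable def S : ℝ := Real.sqrt 3

lemma hS2 : S ^ 2 = 3 := Real.sq_sqrt (by norm_num)
lemma hS0 : (0:ℝ) ≤ S := Real.sqrt_nonneg 3
lemma hSl : (1.7:ℝ) ≤ S := by nlinarith [hS2, hS0]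
lemma hSu : S ≤ 1.74 := by nlinarith [hS2, hS0]

abbrev E := EuclideanSpace ℝ (Fin 2)

noncomputable def pt (x y : ℝ) : E := WithLp.toLp 2 ![x, y]

lemma dist_pt (x₁ y₁ x₂ y₂ : ℝ) :
    dist (pt x₁ y₁) (pt x₂ y₂) = Real.sqrt ((x₁ - x₂)^2 + (y₁ - y₂)^2) := by
  rw [EuclideanSpace.dist_eq]
  congr 1
  simp [pt, Fin.sum_univ_two, Real.dist_eq, sq_abs]

lemma one_le_dist {x₁ y₁ x₂ y₂ : ℝ} (h : 1 ≤ (x₁ - x₂)^2 + (y₁ - y₂)^2) :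
    1 ≤ dist (pt x₁ y₁) (pt x₂ y₂) := by
  rw [dist_pt, show (1:ℝ) = Real.sqrt 1 by simp]
  exact Real.sqrt_le_sqrt h

/-! ### The five point families -/

noncomputable def lft (i j : ℕ) : E := pt (i + j/2) (j * S / 2)
noncomputable def rpt (k i j : ℕ) : E := pt (2*k - 1 + S - i - j/2) (j * S / 2)
noncomputable def mpt (k t u : ℕ) : E := pt ((2*k - 1 + S)/2 - t/2 + u) (1/2 + (t+1) * S / 2)
noncomputable def apt (k t u : ℕ) : E := pt ((2*k - 1 + S)/2 - t/2 + u) (3/2 + (2*k - 1 - t) * S / 2)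
noncomputable def wpt (k : ℕ) : E := pt ((2*k - 1 + S)/2 - 1/2) (1/2)
-- note: in rpt/mpt/apt all arithmetic is in ℝ (casts of i j t u k).

/-- generic same-lattice separation:
`dx = (a−c) + (b−d)/2`, `dy = (b−d)·S/2`, `(a,b) ≠ (c,d)`. -/
lemma lattice_sep {a b c d : ℕ} (h : (a, b) ≠ (c, d)) :
    1 ≤ (((a:ℝ) - c) + ((b:ℝ) - d)/2)^2 + (((b:ℝ) - d) * S / 2)^2 := by
  rcases Nat.lt_trichotomy b d with hb | hb | hb
  · rcases Nat.lt_or_ge (b+1) d with h2 | h2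
    · -- d ≥ b+2
      have : (b:ℝ) + 2 ≤ d := by exact_mod_cast h2
      nlinarith [hS2, hS0, sq_nonneg (((a:ℝ) - c) + ((b:ℝ) - d)/2), sq_nonneg ((b:ℝ) - d + 2)]
    · -- d = b+1
      have hd : d = b + 1 := by omega
      subst hd
      rcases le_or_gt a c with h3 | h3
      · have h4 : (a:ℝ) ≤ c := by exact_mod_cast h3
        push_cast
        nlinarith [hS2, hS0]
      · have h4 : (c:ℝ) + 1 ≤ a := by exact_mod_cast h3
        push_cast
        nlinarith [hS2, hS0]
  · -- b = d, so a ≠ c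
    subst hb
    have ha : a ≠ c := fun hc => h (by rw [hc])
    rcases Nat.lt_or_ge a c with h3 | h3
    · have : (a:ℝ) + 1 ≤ c := by exact_mod_cast h3
      nlinarith
    · have h4 : c < a := by omega
      have : (c:ℝ) + 1 ≤ a := by exact_mod_cast h4
      nlinarith
  · rcases Nat.lt_or_ge (d+1) b with h2 | h2
    · have : (d:ℝ) + 2 ≤ b := by exact_mod_cast h2
      nlinarith [hS2, hS0, sq_nonneg (((a:ℝ) - c) + ((b:ℝ) - d)/2), sq_nonneg ((b:ℝ) - d - 2)]
    · have hd : b = d + 1 := by omega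
      subst hd
      rcases lt_trichotomy a c with h3 | h3 | h3
      · have h4 : (a:ℝ) + 1 ≤ c := by exact_mod_cast h3
        push_cast
        nlinarith [hS2, hS0]
      · subst h3
        push_cast
        nlinarith [hS2, hS0]
      · have h4 : (c:ℝ) + 1 ≤ a := by exact_mod_cast h3
        push_cast
        nlinarith [hS2, hS0]

/-! ### Within-family separation -/

lemma sep_lft_lft {i j i' j' : ℕ} (h : (i,j) ≠ (i',j')) :
    1 ≤ dist (lft i j) (lft i' j') := by
  unfold lft; apply one_le_dist
  have := lattice_sep h
  nlinarith [this]

lemma sep_rpt_rpt {k i j i' j' : ℕ} (h : (i,j) ≠ (i',j')) :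
    1 ≤ dist (rpt k i j) (rpt k i' j') := by
  unfold rpt; apply one_le_dist
  have := lattice_sep h
  nlinarith [this]

lemma sep_mpt_mpt {k t u t' u' : ℕ} (h : (t,u) ≠ (t',u')) :
    1 ≤ dist (mpt k t u) (mpt k t' u') := by
  unfold mpt; apply one_le_dist
  have h' : (u, t') ≠ (u', t) := by
    intro hc
    simp only [Prod.mk.injEq] at hc
    exact h (by simp only [Prod.mk.injEq]; exact ⟨hc.2.symm, hc.1⟩)
  have := lattice_sep h'
  nlinarith [this]

lemma sep_apt_apt {k t u t' u' : ℕ} (h : (t,u) ≠ (t',u')) :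
    1 ≤ dist (apt k t u) (apt k t' u') := by
  unfold apt; apply one_le_dist
  have h' : (u, t') ≠ (u', t) := by
    intro hc
    simp only [Prod.mk.injEq] at hc
    exact h (by simp only [Prod.mk.injEq]; exact ⟨hc.2.symm, hc.1⟩)
  have := lattice_sep h'
  nlinarith [this]

/-! ### Cross-family separation -/

lemma sep_lft_rpt {k i j i' j' : ℕ} (h1 : i + j ≤ k) (h2 : j ≤ 1 → i + j + 1 ≤ k)
    (h1' : i' + j' ≤ k) :
    1 ≤ dist (lft i j) (rpt k i' j') := by
  unfold lft rpt; apply one_le_dist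
  have c1 : (i:ℝ) + j ≤ k := by exact_mod_cast h1
  have c1' : (i':ℝ) + j' ≤ k := by exact_mod_cast h1'
  rcases Nat.lt_or_ge (j+1) j' with hj | hj
  · have cj : (j:ℝ) + 2 ≤ j' := by exact_mod_cast hj
    have hdy : S - 1/2 ≤ (j':ℝ) * S / 2 - (j:ℝ) * S / 2 := by
      nlinarith [mul_nonneg hS0 (by linarith : (0:ℝ) ≤ (j':ℝ) - j - 2), hSl]
    nlinarith [hdy, hSl, sq_nonneg ((i:ℝ) + j/2 - (2*k - 1 + S - i' - j'/2))]
  rcases Nat.lt_or_ge (j'+1) j with hj2 | hj2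
  · have cj : (j':ℝ) + 2 ≤ j := by exact_mod_cast hj2
    have hdy : S - 1/2 ≤ (j:ℝ) * S / 2 - (j':ℝ) * S / 2 := by
      nlinarith [mul_nonneg hS0 (by linarith : (0:ℝ) ≤ (j:ℝ) - j' - 2), hSl]
    nlinarith [hdy, hSl, sq_nonneg ((i:ℝ) + j/2 - (2*k - 1 + S - i' - j'/2))]
  rcases Nat.lt_trichotomy j j' with hje | hje | hje
  · have hj' : j' = j + 1 := by omega
    subst hj'
    push_cast at c1' ⊢
    have hdx : S - 1/2 ≤ (2*(k:ℝ) - 1 + S - i' - ((j:ℝ)+1)/2) - ((i:ℝ) + j/2) := by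
      linarith
    nlinarith [hS2, hS0, hSl, hdx]
  · subst hje
    rcases Nat.lt_or_ge 1 j with hjj | hjj
    · have cj : (2:ℝ) ≤ j := by exact_mod_cast hjj
      have hdx : 1 + S ≤ (2*(k:ℝ) - 1 + S - i' - (j:ℝ)/2) - ((i:ℝ) + j/2) := by
        linarith
      nlinarith [hS0, hSl, hdx]
    · have c2 : (i:ℝ) + j + 1 ≤ k := by exact_mod_cast h2 hjj
      have hdx : S ≤ (2*(k:ℝ) - 1 + S - i' - (j:ℝ)/2) - ((i:ℝ) + j/2) := by
        linarith
      nlinarith [hS2, hS0, hSl, hdx]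
  · have hj' : j = j' + 1 := by omega
    subst hj'
    push_cast at c1 ⊢
    have hdx : S - 1/2 ≤ (2*(k:ℝ) - 1 + S - i' - (j':ℝ)/2) - ((i:ℝ) + ((j':ℝ)+1)/2) := by
      linarith
    nlinarith [hS2, hS0, hSl, hdx]

lemma sep_lft_mpt {k i j t u : ℕ} (h1 : i + j ≤ k) (hu : u ≤ t) (ht : t + 1 ≤ k) :
    1 ≤ dist (lft i j) (mpt k t u) := by
  unfold lft mpt; apply one_le_dist
  have c1 : (i:ℝ) + j ≤ k := by exact_mod_cast h1
  have cu : (u:ℝ) ≤ t := by exact_mod_cast hu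
  have cu0 : (0:ℝ) ≤ u := Nat.cast_nonneg u
  rcases Nat.lt_or_ge t j with hcase | hcase
  · rcases Nat.lt_trichotomy j (t+1) with h3 | h3 | h3
    · omega
    · subst h3
      push_cast at c1 ⊢
      have hdx : S/2 ≤ ((2*(k:ℝ) - 1 + S)/2 - t/2 + u) - ((i:ℝ) + ((t:ℝ)+1)/2) := by
        linarith
      nlinarith [hS2, hS0, hdx]
    · rcases Nat.lt_trichotomy j (t+2) with h4 | h4 | h4
      · omega
      · subst h4
        push_cast at c1 ⊢
        have hdx : (1+S)/2 ≤ ((2*(k:ℝ) - 1 + S)/2 - t/2 + u) - ((i:ℝ) + ((t:ℝ)+2)/2) := by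
          linarith
        nlinarith [hS2, hS0, hSl, hdx]
      · have cj : (t:ℝ) + 3 ≤ j := by exact_mod_cast h4
        have hdy : S - 1/2 ≤ (j:ℝ) * S / 2 - (1/2 + ((t:ℝ)+1) * S / 2) := by
          nlinarith [mul_nonneg hS0 (by linarith : (0:ℝ) ≤ (j:ℝ) - t - 3), hSl]
        nlinarith [hdy, hSl, sq_nonneg ((i:ℝ) + j/2 - ((2*(k:ℝ) - 1 + S)/2 - t/2 + u))]
  · have cj : (j:ℝ) ≤ t := by exact_mod_cast hcase
    have hdy : (1+S)/2 ≤ (1/2 + ((t:ℝ)+1) * S / 2) - (j:ℝ) * S / 2 := by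
      nlinarith [mul_nonneg hS0 (by linarith : (0:ℝ) ≤ (t:ℝ) - j)]
    nlinarith [hdy, hSl, sq_nonneg ((i:ℝ) + j/2 - ((2*(k:ℝ) - 1 + S)/2 - t/2 + u))]

lemma sep_lft_apt {k i j t u : ℕ} (hj : j ≤ k) (ht : t + 1 ≤ k) :
    1 ≤ dist (lft i j) (apt k t u) := by
  unfold lft apt; apply one_le_dist
  have cj : (j:ℝ) ≤ k := by exact_mod_cast hj
  have ct : (t:ℝ) + 1 ≤ k := by exact_mod_cast ht
  have hdy : 3/2 ≤ (3/2 + (2*(k:ℝ) - 1 - t) * S / 2) - (j:ℝ) * S / 2 := by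
    nlinarith [mul_nonneg hS0 (by linarith : (0:ℝ) ≤ 2*(k:ℝ) - 1 - t - j)]
  nlinarith [hdy, sq_nonneg ((i:ℝ) + j/2 - ((2*(k:ℝ) - 1 + S)/2 - t/2 + u))]

lemma sep_lft_wpt {k i j : ℕ} (h1 : i + j ≤ k) (h2 : j ≤ 1 → i + j + 1 ≤ k) :
    1 ≤ dist (lft i j) (wpt k) := by
  unfold lft wpt; apply one_le_dist
  have c1 : (i:ℝ) + j ≤ k := by exact_mod_cast h1
  rcases Nat.lt_or_ge 1 j with hj | hj
  · have cj : (2:ℝ) ≤ j := by exact_mod_cast hj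
    have hdy : S - 1/2 ≤ (j:ℝ) * S / 2 - 1/2 := by
      nlinarith [mul_nonneg hS0 (by linarith : (0:ℝ) ≤ (j:ℝ) - 2)]
    nlinarith [hdy, hSl, sq_nonneg ((i:ℝ) + j/2 - ((2*(k:ℝ) - 1 + S)/2 - 1/2))]
  · have c2 : (i:ℝ) + j + 1 ≤ k := by exact_mod_cast h2 hj
    interval_cases j
    · have hdx : S/2 ≤ ((2*(k:ℝ) - 1 + S)/2 - 1/2) - ((i:ℝ) + (0:ℕ)/2) := by
        push_cast
        linarith
      push_cast at hdx ⊢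
      nlinarith [hS2, hS0, hdx]
    · have hdx : (1+S)/2 ≤ ((2*(k:ℝ) - 1 + S)/2 - 1/2) - ((i:ℝ) + (1:ℝ)/2) := by
        push_cast at c2
        linarith
      push_cast
      nlinarith [hS2, hS0, hSl, hdx]

lemma sep_rpt_mpt {k i j t u : ℕ} (h1 : i + j ≤ k) (hu : u ≤ t) (ht : t + 1 ≤ k) :
    1 ≤ dist (rpt k i j) (mpt k t u) := by
  unfold rpt mpt; apply one_le_dist
  have c1 : (i:ℝ) + j ≤ k := by exact_mod_cast h1
  have cu : (u:ℝ) ≤ t := by exact_mod_cast hu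
  have cu0 : (0:ℝ) ≤ u := Nat.cast_nonneg u
  rcases Nat.lt_or_ge t j with hcase | hcase
  · rcases Nat.lt_trichotomy j (t+1) with h3 | h3 | h3
    · omega
    · subst h3
      push_cast at c1 ⊢
      have hdx : S/2 ≤ (2*(k:ℝ) - 1 + S - i - ((t:ℝ)+1)/2) - ((2*(k:ℝ) - 1 + S)/2 - t/2 + u) := by
        linarith
      nlinarith [hS2, hS0, hdx]
    · rcases Nat.lt_trichotomy j (t+2) with h4 | h4 | h4
      · omega
      · subst h4
        push_cast at c1 ⊢
        have hdx : (1+S)/2 ≤ (2*(k:ℝ) - 1 + S - i - ((t:ℝ)+2)/2) - ((2*(k:ℝ) - 1 + S)/2 - t/2 + u) := by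
          linarith
        nlinarith [hS2, hS0, hSl, hdx]
      · have cj : (t:ℝ) + 3 ≤ j := by exact_mod_cast h4
        have hdy : S - 1/2 ≤ (j:ℝ) * S / 2 - (1/2 + ((t:ℝ)+1) * S / 2) := by
          nlinarith [mul_nonneg hS0 (by linarith : (0:ℝ) ≤ (j:ℝ) - t - 3), hSl]
        nlinarith [hdy, hSl,
          sq_nonneg ((2*(k:ℝ) - 1 + S - i - j/2) - ((2*(k:ℝ) - 1 + S)/2 - t/2 + u))]
  · have cj : (j:ℝ) ≤ t := by exact_mod_cast hcase
    have hdy : (1+S)/2 ≤ (1/2 + ((t:ℝ)+1) * S / 2) - (j:ℝ) * S / 2 := by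
      nlinarith [mul_nonneg hS0 (by linarith : (0:ℝ) ≤ (t:ℝ) - j)]
    nlinarith [hdy, hSl,
      sq_nonneg ((2*(k:ℝ) - 1 + S - i - j/2) - ((2*(k:ℝ) - 1 + S)/2 - t/2 + u))]

lemma sep_rpt_apt {k i j t u : ℕ} (hj : j ≤ k) (ht : t + 1 ≤ k) :
    1 ≤ dist (rpt k i j) (apt k t u) := by
  unfold rpt apt; apply one_le_dist
  have cj : (j:ℝ) ≤ k := by exact_mod_cast hj
  have ct : (t:ℝ) + 1 ≤ k := by exact_mod_cast ht
  have hdy : 3/2 ≤ (3/2 + (2*(k:ℝ) - 1 - t) * S / 2) - (j:ℝ) * S / 2 := by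
    nlinarith [mul_nonneg hS0 (by linarith : (0:ℝ) ≤ 2*(k:ℝ) - 1 - t - j)]
  nlinarith [hdy, sq_nonneg ((2*(k:ℝ) - 1 + S - i - j/2) - ((2*(k:ℝ) - 1 + S)/2 - t/2 + u))]

lemma sep_rpt_wpt {k i j : ℕ} (h1 : i + j ≤ k) :
    1 ≤ dist (rpt k i j) (wpt k) := by
  unfold rpt wpt; apply one_le_dist
  have c1 : (i:ℝ) + j ≤ k := by exact_mod_cast h1
  rcases Nat.lt_or_ge 1 j with hj | hj
  · have cj : (2:ℝ) ≤ j := by exact_mod_cast hj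
    have hdy : S - 1/2 ≤ (j:ℝ) * S / 2 - 1/2 := by
      nlinarith [mul_nonneg hS0 (by linarith : (0:ℝ) ≤ (j:ℝ) - 2)]
    nlinarith [hdy, hSl, sq_nonneg ((2*(k:ℝ) - 1 + S - i - j/2) - ((2*(k:ℝ) - 1 + S)/2 - 1/2))]
  · interval_cases j
    · have hdx : S/2 ≤ (2*(k:ℝ) - 1 + S - i - (0:ℝ)/2) - ((2*(k:ℝ) - 1 + S)/2 - 1/2) := by
        push_cast at c1
        linarith
      push_cast
      nlinarith [hS2, hS0, hdx]
    · have hdx : (1+S)/2 ≤ (2*(k:ℝ) - 1 + S - i - (1:ℝ)/2) - ((2*(k:ℝ) - 1 + S)/2 - 1/2) := by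
        push_cast at c1
        linarith
      push_cast
      nlinarith [hS2, hS0, hSl, hdx]

lemma sep_mpt_apt {k t u t' u' : ℕ} (ht : t + 1 ≤ k) (ht' : t' + 1 ≤ k) :
    1 ≤ dist (mpt k t u) (apt k t' u') := by
  unfold mpt apt; apply one_le_dist
  have ct : (t:ℝ) + 1 ≤ k := by exact_mod_cast ht
  have ct' : (t':ℝ) + 1 ≤ k := by exact_mod_cast ht'
  have hdy : 1 ≤ (3/2 + (2*(k:ℝ) - 1 - t') * S / 2) - (1/2 + ((t:ℝ)+1) * S / 2) := by
    nlinarith [mul_nonneg hS0 (by linarith : (0:ℝ) ≤ 2*(k:ℝ) - 2 - t - t')]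
  nlinarith [hdy,
    sq_nonneg (((2*(k:ℝ) - 1 + S)/2 - t/2 + u) - ((2*(k:ℝ) - 1 + S)/2 - t'/2 + u'))]

lemma sep_mpt_wpt {k t u : ℕ} (hu : u ≤ t) :
    1 ≤ dist (mpt k t u) (wpt k) := by
  unfold mpt wpt; apply one_le_dist
  have cu0 : (0:ℝ) ≤ u := Nat.cast_nonneg u
  rcases Nat.eq_zero_or_pos t with ht | ht
  · subst ht
    have hu0 : u = 0 := by omega
    subst hu0
    push_cast
    nlinarith [hS2, hS0]
  · have ct1 : (1:ℝ) ≤ t := by exact_mod_cast ht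
    have hdy : S ≤ (1/2 + ((t:ℝ)+1) * S / 2) - 1/2 := by
      nlinarith [mul_nonneg hS0 (by linarith : (0:ℝ) ≤ (t:ℝ) - 1)]
    nlinarith [hdy, hS2, hS0, hSl,
      sq_nonneg (((2*(k:ℝ) - 1 + S)/2 - t/2 + u) - ((2*(k:ℝ) - 1 + S)/2 - 1/2))]

lemma sep_apt_wpt {k t u : ℕ} (ht : t + 1 ≤ k) (hk : 1 ≤ k) :
    1 ≤ dist (apt k t u) (wpt k) := by
  unfold apt wpt; apply one_le_dist
  have ct : (t:ℝ) + 1 ≤ k := by exact_mod_cast ht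
  have ck : (1:ℝ) ≤ k := by exact_mod_cast hk
  have hdy : 1 + S/2 ≤ (3/2 + (2*(k:ℝ) - 1 - t) * S / 2) - 1/2 := by
    nlinarith [mul_nonneg hS0 (by linarith : (0:ℝ) ≤ 2*(k:ℝ) - 2 - t)]
  nlinarith [hdy, hS0, hSl,
    sq_nonneg (((2*(k:ℝ) - 1 + S)/2 - t/2 + u) - ((2*(k:ℝ) - 1 + S)/2 - 1/2))]

/-! ### The master family function -/

noncomputable def F (k c b a : ℕ) : E :=
  if c = 0 then
    if b = 0 then (if a = 0 then wpt k else lft (a-1) 0)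
    else if b = 1 then (if a + 2 ≤ k then lft a 1 else if a + 1 = k then mpt k 0 0 else wpt k)
    else if a + b ≤ k then lft a b else mpt k (b-1) (a+b-k-1)
  else
    if a + b ≤ k then rpt k a b else apt k (2*k-a-b) (k-a)

lemma classify0 {k b a : ℕ} (hk : 1 ≤ k) (hb : b ≤ k) (ha : a ≤ k) (h00 : ¬(b = 0 ∧ a = 0)) :
    (∃ i j, F k 0 b a = lft i j ∧ i + j ≤ k ∧ (j ≤ 1 → i + j + 1 ≤ k) ∧
        b = j ∧ (j = 0 → a = i + 1) ∧ (j ≠ 0 → a = i))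
    ∨ (∃ t u, F k 0 b a = mpt k t u ∧ u ≤ t ∧ t + 1 ≤ k ∧
        b = t + 1 ∧ (t = 0 → a + 1 = k ∨ (b = 0 ∧ a = 0)) ∧ (t ≠ 0 → a = u + k - t ∧ u + k ≥ t))
    ∨ (F k 0 b a = wpt k ∧ b = 1 ∧ a = k) := by
  unfold F
  rw [if_pos rfl]
  split_ifs with hb0 ha0 hb1 hak hak1 habk
  · exact absurd ⟨hb0, ha0⟩ h00
  · -- b = 0, a ≠ 0 : lft (a-1) 0
    left; exact ⟨a-1, 0, rfl, by omega, by omega, by omega, by omega, by omega⟩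
  · -- b = 1, a + 2 ≤ k : lft a 1
    left; exact ⟨a, 1, rfl, by omega, by omega, by omega, by omega, by omega⟩
  · -- b = 1, a + 1 = k : mpt 0 0
    right; left; exact ⟨0, 0, rfl, le_rfl, by omega, by omega, by omega, by omega⟩
  · -- b = 1, a = k : wpt
    right; right; exact ⟨rfl, hb1, by omega⟩
  · -- b ≥ 2, a + b ≤ k : lft a b
    left; exact ⟨a, b, rfl, habk, by omega, rfl, by omega, by omega⟩
  · -- b ≥ 2, a + b > k : mpt (b-1) (a+b-k-1)
    right; left
    exact ⟨b-1, a+b-k-1, rfl, by omega, by omega, by omega, by omega, by omega⟩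

lemma classify1 {k b a : ℕ} (hb : b ≤ k) (ha : a ≤ k) :
    (∃ i j, F k 1 b a = rpt k i j ∧ i + j ≤ k ∧ a = i ∧ b = j)
    ∨ (∃ t u, F k 1 b a = apt k t u ∧ u ≤ t ∧ t + 1 ≤ k ∧ a + u = k ∧ b + t = k + u) := by
  unfold F
  rw [if_neg (by norm_num : ¬(1:ℕ) = 0)]
  split_ifs with habk
  · left; exact ⟨a, b, rfl, habk, rfl, rfl⟩
  · right; exact ⟨2*k-a-b, k-a, rfl, by omega, by omega, by omega, by omega⟩

lemma sep_main {k : ℕ} (hk : 1 ≤ k) {c b a c' b' a' : ℕ}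
    (hc : c ≤ 1) (hb : b ≤ k) (ha : a ≤ k)
    (hc' : c' ≤ 1) (hb' : b' ≤ k) (ha' : a' ≤ k)
    (hne : (c, b, a) ≠ (c', b', a'))
    (h0 : ¬(c = 0 ∧ b = 0 ∧ a = 0)) (h0' : ¬(c' = 0 ∧ b' = 0 ∧ a' = 0)) :
    1 ≤ dist (F k c b a) (F k c' b' a') := by
  interval_cases c <;> interval_cases c'
  · -- c = 0, c' = 0
    rcases classify0 hk hb ha (by omega) with ⟨i,j,hF,p1,p2,q1,q2,q3⟩ | ⟨t,u,hF,p1,p2,q1,q2,q3⟩ | ⟨hF,q1,q2⟩ <;>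
      rcases classify0 hk hb' ha' (by omega) with ⟨i',j',hF',p1',p2',q1',q2',q3'⟩ | ⟨t',u',hF',p1',p2',q1',q2',q3'⟩ | ⟨hF',q1',q2'⟩ <;>
      rw [hF, hF']
    · refine sep_lft_lft ?_
      intro hp
      rw [Prod.mk.injEq] at hp
      exact hne (by rw [show b = b' by omega, show a = a' by omega])
    · exact sep_lft_mpt p1 p1' p2'
    · exact sep_lft_wpt p1 p2
    · rw [dist_comm]; exact sep_lft_mpt p1' p1 p2
    · refine sep_mpt_mpt ?_
      intro hp
      rw [Prod.mk.injEq] at hp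
      exact hne (by rw [show b = b' by omega, show a = a' by omega])
    · exact sep_mpt_wpt p1
    · rw [dist_comm]; exact sep_lft_wpt p1' p2'
    · rw [dist_comm]; exact sep_mpt_wpt p1'
    · exact absurd (by rw [show b = b' by omega, show a = a' by omega]) hne
  · -- c = 0, c' = 1
    rcases classify0 hk hb ha (by omega) with ⟨i,j,hF,p1,p2,q1,q2,q3⟩ | ⟨t,u,hF,p1,p2,q1,q2,q3⟩ | ⟨hF,q1,q2⟩ <;>
      rcases classify1 hb' ha' with ⟨i',j',hF',p1',q1',q2'⟩ | ⟨t',u',hF',p1',p2',q1',q2'⟩ <;>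
      rw [hF, hF']
    · exact sep_lft_rpt p1 p2 p1'
    · exact sep_lft_apt (by omega) p2'
    · rw [dist_comm]; exact sep_rpt_mpt p1' p1 p2
    · exact sep_mpt_apt p2 p2'
    · rw [dist_comm]; exact sep_rpt_wpt p1'
    · rw [dist_comm]; exact sep_apt_wpt p2' hk
  · -- c = 1, c' = 0
    rcases classify1 hb ha with ⟨i,j,hF,p1,q1,q2⟩ | ⟨t,u,hF,p1,p2,q1,q2⟩ <;>
      rcases classify0 hk hb' ha' (by omega) with ⟨i',j',hF',p1',p2',q1',q2',q3'⟩ | ⟨t',u',hF',p1',p2',q1',q2',q3'⟩ | ⟨hF',q1',q2'⟩ <;>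
      rw [hF, hF']
    · rw [dist_comm]; exact sep_lft_rpt p1' p2' p1
    · exact sep_rpt_mpt p1 p1' p2'
    · exact sep_rpt_wpt p1
    · rw [dist_comm]; exact sep_lft_apt (by omega) p2
    · rw [dist_comm]; exact sep_mpt_apt p2' p2
    · exact sep_apt_wpt p2 hk
  · -- c = 1, c' = 1
    rcases classify1 hb ha with ⟨i,j,hF,p1,q1,q2⟩ | ⟨t,u,hF,p1,p2,q1,q2⟩ <;>
      rcases classify1 hb' ha' with ⟨i',j',hF',p1',q1',q2'⟩ | ⟨t',u',hF',p1',p2',q1',q2'⟩ <;>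
      rw [hF, hF']
    · refine sep_rpt_rpt ?_
      intro hp
      rw [Prod.mk.injEq] at hp
      exact hne (by rw [show b = b' by omega, show a = a' by omega])
    · exact sep_rpt_apt (by omega) p2'
    · rw [dist_comm]; exact sep_rpt_apt (by omega) p2
    · refine sep_apt_apt ?_
      intro hp
      rw [Prod.mk.injEq] at hp
      exact hne (by rw [show b = b' by omega, show a = a' by omega])

/-! ### Convex hull membership -/

lemma mem_tri {L x y : ℝ} (hL : 0 < L) (h0 : 0 ≤ y) (h1 : y * S ≤ 3 * x)
    (h2 : y * S ≤ 3 * (L - x)) :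
    pt x y ∈ convexHull ℝ ({pt 0 0, pt L 0, pt (L/2) (L*S/2)} : Set E) := by
  have hsum : ∑ i : Fin 3, (![(3*L-3*x-y*S)/(3*L), (3*x-y*S)/(3*L), 2*y*S/(3*L)]) i = 1 := by
    simp [Fin.sum_univ_three]
    field_simp
    ring
  have key : pt x y = Finset.univ.centerMass
      ![(3*L-3*x-y*S)/(3*L), (3*x-y*S)/(3*L), 2*y*S/(3*L)]
      ![pt 0 0, pt L 0, pt (L/2) (L*S/2)] := by
    rw [Finset.centerMass, hsum, inv_one, one_smul, Fin.sum_univ_three]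
    ext i
    fin_cases i <;>
      simp [pt, Pi.add_apply, Pi.smul_apply, smul_eq_mul] <;>
      field_simp <;>
      (first | ring1 | linear_combination (-2*y*L) * hS2 | linear_combination (2*y*L) * hS2 | linear_combination (-y) * hS2)
  rw [key]
  refine Finset.centerMass_mem_convexHull _ (fun i _ => ?_) (by rw [hsum]; norm_num)
    (fun i _ => ?_)
  · fin_cases i
    · exact div_nonneg (by linarith) (by linarith)
    · exact div_nonneg (by linarith) (by linarith)
    · exact div_nonneg (by nlinarith [hS0]) (by linarith)
  · fin_cases i
    · simp
    · simp
    · simp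

lemma lft_mem {k i j : ℕ} (hk : 1 ≤ k) (h1 : i + j ≤ k) :
    lft i j ∈ convexHull ℝ ({pt 0 0, pt (2*(k:ℝ)-1+S) 0,
      pt ((2*(k:ℝ)-1+S)/2) ((2*(k:ℝ)-1+S)*S/2)} : Set E) := by
  have ck : (1:ℝ) ≤ k := by exact_mod_cast hk
  have c1 : (i:ℝ) + j ≤ k := by exact_mod_cast h1
  have ci : (0:ℝ) ≤ i := Nat.cast_nonneg i
  have cj : (0:ℝ) ≤ j := Nat.cast_nonneg j
  have hL : 0 < 2*(k:ℝ)-1+S := by nlinarith [hS0]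
  unfold lft
  refine mem_tri hL ?_ ?_ ?_
  · nlinarith [hS0]
  · nlinarith [hS2, hS0]
  · nlinarith [hS2, hS0]

lemma rpt_mem {k i j : ℕ} (hk : 1 ≤ k) (h1 : i + j ≤ k) :
    rpt k i j ∈ convexHull ℝ ({pt 0 0, pt (2*(k:ℝ)-1+S) 0,
      pt ((2*(k:ℝ)-1+S)/2) ((2*(k:ℝ)-1+S)*S/2)} : Set E) := by
  have ck : (1:ℝ) ≤ k := by exact_mod_cast hk
  have c1 : (i:ℝ) + j ≤ k := by exact_mod_cast h1
  have ci : (0:ℝ) ≤ i := Nat.cast_nonneg i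
  have cj : (0:ℝ) ≤ j := Nat.cast_nonneg j
  have hL : 0 < 2*(k:ℝ)-1+S := by nlinarith [hS0]
  unfold rpt
  refine mem_tri hL ?_ ?_ ?_
  · nlinarith [hS0]
  · nlinarith [hS2, hS0]
  · nlinarith [hS2, hS0]

lemma mpt_mem {k t u : ℕ} (hk : 1 ≤ k) (hu : u ≤ t) (ht : t + 1 ≤ k) :
    mpt k t u ∈ convexHull ℝ ({pt 0 0, pt (2*(k:ℝ)-1+S) 0,
      pt ((2*(k:ℝ)-1+S)/2) ((2*(k:ℝ)-1+S)*S/2)} : Set E) := by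
  have ck : (1:ℝ) ≤ k := by exact_mod_cast hk
  have cu : (u:ℝ) ≤ t := by exact_mod_cast hu
  have ct : (t:ℝ) + 1 ≤ k := by exact_mod_cast ht
  have cu0 : (0:ℝ) ≤ u := Nat.cast_nonneg u
  have hL : 0 < 2*(k:ℝ)-1+S := by nlinarith [hS0]
  unfold mpt
  refine mem_tri hL ?_ ?_ ?_
  · nlinarith [hS0]
  · nlinarith [hS2, hS0]
  · nlinarith [hS2, hS0]

lemma apt_mem {k t u : ℕ} (hk : 1 ≤ k) (hu : u ≤ t) (ht : t + 1 ≤ k) :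
    apt k t u ∈ convexHull ℝ ({pt 0 0, pt (2*(k:ℝ)-1+S) 0,
      pt ((2*(k:ℝ)-1+S)/2) ((2*(k:ℝ)-1+S)*S/2)} : Set E) := by
  have ck : (1:ℝ) ≤ k := by exact_mod_cast hk
  have cu : (u:ℝ) ≤ t := by exact_mod_cast hu
  have ct : (t:ℝ) + 1 ≤ k := by exact_mod_cast ht
  have cu0 : (0:ℝ) ≤ u := Nat.cast_nonneg u
  have hL : 0 < 2*(k:ℝ)-1+S := by nlinarith [hS0]
  unfold apt
  refine mem_tri hL ?_ ?_ ?_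
  · nlinarith [hS0, mul_nonneg hS0 (by linarith : (0:ℝ) ≤ 2*(k:ℝ)-1-t)]
  · nlinarith [hS2, hS0, mul_nonneg hS0 cu0]
  · nlinarith [hS2, hS0, mul_nonneg hS0 (by linarith : (0:ℝ) ≤ (t:ℝ)-u)]

lemma wpt_mem {k : ℕ} (hk : 1 ≤ k) :
    wpt k ∈ convexHull ℝ ({pt 0 0, pt (2*(k:ℝ)-1+S) 0,
      pt ((2*(k:ℝ)-1+S)/2) ((2*(k:ℝ)-1+S)*S/2)} : Set E) := by
  have ck : (1:ℝ) ≤ k := by exact_mod_cast hk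
  have hL : 0 < 2*(k:ℝ)-1+S := by nlinarith [hS0]
  unfold wpt
  refine mem_tri hL (by norm_num) ?_ ?_
  · nlinarith [hS2, hS0]
  · nlinarith [hS2, hS0]

lemma F_mem {k c b a : ℕ} (hk : 1 ≤ k) (hc : c ≤ 1) (hb : b ≤ k) (ha : a ≤ k)
    (h0 : ¬(c = 0 ∧ b = 0 ∧ a = 0)) :
    F k c b a ∈ convexHull ℝ ({pt 0 0, pt (2*(k:ℝ)-1+S) 0,
      pt ((2*(k:ℝ)-1+S)/2) ((2*(k:ℝ)-1+S)*S/2)} : Set E) := by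
  interval_cases c
  · rcases classify0 hk hb ha (by omega) with ⟨i,j,hF,p1,p2,q1,q2,q3⟩ |
      ⟨t,u,hF,p1,p2,q1,q2,q3⟩ | ⟨hF,q1,q2⟩ <;> rw [hF]
    · exact lft_mem hk p1
    · exact mpt_mem hk p1 p2
    · exact wpt_mem hk
  · rcases classify1 hb ha with ⟨i,j,hF,p1,q1,q2⟩ | ⟨t,u,hF,p1,p2,q1,q2⟩ <;> rw [hF]
    · exact rpt_mem hk p1
    · exact apt_mem hk p1 p2

/-! ### Decoding `Fin (2(k+1)² − 1)` into triples -/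

lemma decode_lt {k : ℕ} {m : ℕ} (hm : m < 2*(k+1)^2) :
    m / (k+1)^2 ≤ 1 ∧ (m % (k+1)^2) / (k+1) ≤ k ∧ (m % (k+1)^2) % (k+1) ≤ k := by
  have hQ : 0 < (k+1)^2 := by positivity
  have hK : 0 < k + 1 := Nat.succ_pos k
  refine ⟨?_, ?_, ?_⟩
  · have h : m / (k+1)^2 < 2 := Nat.div_lt_of_lt_mul
      (by calc m < 2*(k+1)^2 := hm
          _ = (k+1)^2 * 2 := by ring)
    exact Nat.lt_succ_iff.mp h
  · have h1 : m % (k+1)^2 < (k+1)^2 := Nat.mod_lt _ hQ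
    have h2 : (m % (k+1)^2) / (k+1) < k+1 := Nat.div_lt_of_lt_mul
      (by calc m % (k+1)^2 < (k+1)^2 := h1
          _ = (k+1) * (k+1) := by ring)
    exact Nat.lt_succ_iff.mp h2
  · exact Nat.lt_succ_iff.mp (Nat.mod_lt (m % (k+1)^2) hK)

lemma decode_inj {k m m' : ℕ}
    (h1 : m / (k+1)^2 = m' / (k+1)^2)
    (h2 : (m % (k+1)^2) / (k+1) = (m' % (k+1)^2) / (k+1))
    (h3 : (m % (k+1)^2) % (k+1) = (m' % (k+1)^2) % (k+1)) : m = m' := by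
  have e1 : (k+1)^2 * (m / (k+1)^2) + m % (k+1)^2 = m := Nat.div_add_mod m ((k+1)^2)
  have e1' : (k+1)^2 * (m' / (k+1)^2) + m' % (k+1)^2 = m' := Nat.div_add_mod m' ((k+1)^2)
  have e2 : (k+1) * ((m % (k+1)^2) / (k+1)) + (m % (k+1)^2) % (k+1) = m % (k+1)^2 :=
    Nat.div_add_mod _ (k+1)
  have e2' : (k+1) * ((m' % (k+1)^2) / (k+1)) + (m' % (k+1)^2) % (k+1) = m' % (k+1)^2 :=
    Nat.div_add_mod _ (k+1)
  have hr : m % (k+1)^2 = m' % (k+1)^2 := by rw [← e2, ← e2', h2, h3]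
  rw [← e1, ← e1', h1, hr]

lemma decode_ne_zero {k m : ℕ} (hm : 1 ≤ m)
    (hc : m / (k+1)^2 = 0) (hb : (m % (k+1)^2) / (k+1) = 0)
    (ha : (m % (k+1)^2) % (k+1) = 0) : False := by
  have : m = 0 := decode_inj (m' := 0) (by simpa using hc) (by simpa using hb)
    (by simpa using ha)
  omega

/-! ### Main theorem -/

theorem main (k : ℕ) (hk : 1 ≤ k) :
    ∃ (a b c : EuclideanSpace ℝ (Fin 2))
      (P : Fin (2 * (k + 1) ^ 2 - 1) → EuclideanSpace ℝ (Fin 2)),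
      dist a b = 2 * (k : ℝ) - 1 + Real.sqrt 3 ∧
      dist a c = 2 * (k : ℝ) - 1 + Real.sqrt 3 ∧
      dist b c = 2 * (k : ℝ) - 1 + Real.sqrt 3 ∧
      (∀ i, P i ∈ convexHull ℝ ({a, b, c} : Set (EuclideanSpace ℝ (Fin 2)))) ∧
      (∀ i j, i ≠ j → 1 ≤ dist (P i) (P j)) := by
  have ck : (1:ℝ) ≤ k := by exact_mod_cast hk
  have hL0 : 0 ≤ 2*(k:ℝ)-1+S := by nlinarith [hS0]
  refine ⟨pt 0 0, pt (2*(k:ℝ)-1+S) 0,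
    pt ((2*(k:ℝ)-1+S)/2) ((2*(k:ℝ)-1+S)*S/2),
    fun m => F k (((m:ℕ)+1) / (k+1)^2) (((((m:ℕ)+1)) % (k+1)^2) / (k+1))
      (((((m:ℕ)+1)) % (k+1)^2) % (k+1)), ?_, ?_, ?_, ?_, ?_⟩
  · rw [dist_pt, show ((0:ℝ) - (2*(k:ℝ)-1+S))^2 + ((0:ℝ)-0)^2 = (2*(k:ℝ)-1+S)^2 by ring,
      Real.sqrt_sq hL0]
    rfl
  · rw [dist_pt, show ((0:ℝ) - (2*(k:ℝ)-1+S)/2)^2 + ((0:ℝ)-(2*(k:ℝ)-1+S)*S/2)^2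
        = (2*(k:ℝ)-1+S)^2 by linear_combination ((2*(k:ℝ)-1+S)^2/4) * hS2,
      Real.sqrt_sq hL0]
    rfl
  · rw [dist_pt, show ((2*(k:ℝ)-1+S) - (2*(k:ℝ)-1+S)/2)^2 + ((0:ℝ)-(2*(k:ℝ)-1+S)*S/2)^2
        = (2*(k:ℝ)-1+S)^2 by linear_combination ((2*(k:ℝ)-1+S)^2/4) * hS2,
      Real.sqrt_sq hL0]
    rfl
  · intro m
    have hmlt : (m:ℕ) + 1 < 2*(k+1)^2 := by
      have := m.isLt
      omega
    obtain ⟨d1, d2, d3⟩ := decode_lt hmlt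
    exact F_mem hk d1 d2 d3 (fun ⟨hc, hb, ha⟩ => decode_ne_zero (Nat.le_add_left 1 m) hc hb ha)
  · intro m m' hne
    have hmlt : (m:ℕ) + 1 < 2*(k+1)^2 := by have := m.isLt; omega
    have hmlt' : (m':ℕ) + 1 < 2*(k+1)^2 := by have := m'.isLt; omega
    obtain ⟨d1, d2, d3⟩ := decode_lt hmlt
    obtain ⟨d1', d2', d3'⟩ := decode_lt hmlt'
    refine sep_main hk d1 d2 d3 d1' d2' d3' ?_
      (fun ⟨hc, hb, ha⟩ => decode_ne_zero (Nat.le_add_left 1 m) hc hb ha)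
      (fun ⟨hc, hb, ha⟩ => decode_ne_zero (Nat.le_add_left 1 m') hc hb ha)
    intro hp
    simp only [Prod.mk.injEq] at hp
    obtain ⟨e1, e2, e3⟩ := hp
    have := decode_inj e1 e2 e3
    exact hne (Fin.ext (by omega))

end TTP

/-- **Packings of `2Δ(k+1) + 2Δ(k) − 1 = 2(k+1)² − 1` points.**
For every integer `k ≥ 1` there exist `2(k+1)² − 1` points lying in a closed
equilateral triangle of side length `2k − 1 + √3` (the convex hull of three
points at pairwise distance `2k − 1 + √3`) such that every two distinct points
among them are at distance at least `1`. -/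
theorem two_two_triangular_packing (k : ℕ) (hk : 1 ≤ k) :
    ∃ (a b c : EuclideanSpace ℝ (Fin 2))
      (P : Fin (2 * (k + 1) ^ 2 - 1) → EuclideanSpace ℝ (Fin 2)),
      dist a b = 2 * (k : ℝ) - 1 + Real.sqrt 3 ∧
      dist a c = 2 * (k : ℝ) - 1 + Real.sqrt 3 ∧
      dist b c = 2 * (k : ℝ) - 1 + Real.sqrt 3 ∧
      (∀ i, P i ∈ convexHull ℝ ({a, b, c} : Set (EuclideanSpace ℝ (Fin 2)))) ∧
      (∀ i j, i ≠ j → 1 ≤ dist (P i) (P j)) :=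
  TTP.main k hk
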